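/- Let x ∈ [0,1]^d and suppose for some even-sized set V ⊆ {1,…,d} the forbidden-set inequality Σ_{i∈V} xᵢ - Σ_{i∉V} xᵢ ≤ |V| - 1 is violated (strictly). Then for every other even-sized set W ≠ V, the corresponding forbidden-set inequality holds with strict inequality: Σ_{i∈W} xᵢ - Σ_{i∉W} xᵢ < |W| - 1. -/

import Mathlib

open Finset

/-- Squared Euclidean distance on `Fin d → ℝ`. -/
noncomputable def sqdist {d : ℕ} (x y : Fin d → ℝ) : ℝ := ∑ i, (x i - y i) ^ 2

/-- `z` is the Euclidean (nearest-point) projection of `x` onto `S`. -/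
def IsProj {d : ℕ} (S : Set (Fin d → ℝ)) (x z : Fin d → ℝ) : Prop :=
  z ∈ S ∧ ∀ y ∈ S, sqdist x z ≤ sqdist x y

/-- The even parity polytope: convex hull of 0/1 vectors with an even number of ones. -/
noncomputable def PEven (d : ℕ) : Set (Fin d → ℝ) :=
  convexHull ℝ {x | ∃ S : Finset (Fin d), Even S.card ∧ ∀ i, x i = if i ∈ S then 1 else 0}

/-- The odd parity polytope: convex hull of 0/1 vectors with an odd number of ones. -/
noncomputable def POdd (d : ℕ) : Set (Fin d → ℝ) :=
  convexHull ℝ {x | ∃ S : Finset (Fin d), Odd S.card ∧ ∀ i, x i = if i ∈ S then 1 else 0}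

/-- Key identity: summing the "distance to the vertex pattern of V" over all coordinates. -/
lemma sum_ind_eq {d : ℕ} (x : Fin d → ℝ) (V : Finset (Fin d)) :
    ∑ i, (if i ∈ V then 1 - x i else x i)
      = (V.card : ℝ) - ∑ i ∈ V, x i + ∑ i ∈ Vᶜ, x i := by
  rw [← Finset.sum_add_sum_compl V]
  have h1 : ∑ i ∈ V, (if i ∈ V then 1 - x i else x i) = ∑ i ∈ V, (1 - x i) :=
    Finset.sum_congr rfl fun i hi => by simp [hi]
  have h2 : ∑ i ∈ Vᶜ, (if i ∈ V then 1 - x i else x i) = ∑ i ∈ Vᶜ, x i :=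
    Finset.sum_congr rfl fun i hi => by simp [Finset.mem_compl.mp hi]
  rw [h1, h2, Finset.sum_sub_distrib, Finset.sum_const, nsmul_eq_mul, mul_one]

theorem at_most_one_even_cut (d : ℕ) (x : Fin d → ℝ)
    (hx : ∀ i, 0 ≤ x i ∧ x i ≤ 1)
    (V : Finset (Fin d)) (hV : Even V.card)
    (hcut : (V.card : ℝ) - 1 < ∑ i ∈ V, x i - ∑ i ∈ Vᶜ, x i) :
    ∀ W : Finset (Fin d), Even W.card → W ≠ V →
      ∑ i ∈ W, x i - ∑ i ∈ Wᶜ, x i < (W.card : ℝ) - 1 := by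
  intro W hW hne
  set a : Fin d → ℝ := fun i => if i ∈ V then 1 - x i else x i with ha_def
  set b : Fin d → ℝ := fun i => if i ∈ W then 1 - x i else x i with hb_def
  have ha : ∀ i, 0 ≤ a i ∧ a i ≤ 1 := by
    intro i
    simp only [ha_def]
    split_ifs <;> constructor <;> linarith [(hx i).1, (hx i).2]
  have hb : ∀ i, 0 ≤ b i ∧ b i ≤ 1 := by
    intro i
    simp only [hb_def]
    split_ifs <;> constructor <;> linarith [(hx i).1, (hx i).2]
  have hA : ∑ i, a i < 1 := by
    have := sum_ind_eq x V
    rw [← ha_def] at this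
    linarith
  have hgoal : (1 : ℝ) < ∑ i, b i → ∑ i ∈ W, x i - ∑ i ∈ Wᶜ, x i < (W.card : ℝ) - 1 := by
    intro h
    have := sum_ind_eq x W
    rw [← hb_def] at this
    linarith
  apply hgoal
  -- the symmetric difference
  set S : Finset (Fin d) := (V \ W) ∪ (W \ V) with hS_def
  have hdisj : Disjoint (V \ W) (W \ V) := by
    apply Finset.disjoint_left.mpr
    intro i hi hi'
    exact (Finset.mem_sdiff.mp hi').2 (Finset.mem_sdiff.mp hi).1
  have hScard : S.card = (V \ W).card + (W \ V).card :=
    Finset.card_union_of_disjoint hdisj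
  have hSne : S.Nonempty := by
    rcases Finset.eq_empty_or_nonempty S with h | h
    · exfalso
      apply hne
      have h1 : V \ W = ∅ := Finset.union_eq_empty.mp h |>.1
      have h2 : W \ V = ∅ := Finset.union_eq_empty.mp h |>.2
      exact le_antisymm (Finset.sdiff_eq_empty_iff_subset.mp h2)
        (Finset.sdiff_eq_empty_iff_subset.mp h1)
    · exact h
  have hSeven : Even S.card := by
    have e1 := Finset.card_sdiff_add_card_inter V W
    have e2 := Finset.card_sdiff_add_card_inter W V
    rw [Finset.inter_comm] at e2
    obtain ⟨k, hk⟩ := hV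
    obtain ⟨m, hm⟩ := hW
    exact ⟨(S.card) / 2, by omega⟩
  have hS2 : 2 ≤ S.card := by
    obtain ⟨k, hk⟩ := hSeven
    have := Finset.card_pos.mpr hSne
    omega
  have hSb : ∀ i ∈ S, b i = 1 - a i := by
    intro i hi
    rcases Finset.mem_union.mp hi with h | h
    · have h1 := (Finset.mem_sdiff.mp h).1
      have h2 := (Finset.mem_sdiff.mp h).2
      simp [ha_def, hb_def, h1, h2]
    · have h1 := (Finset.mem_sdiff.mp h).1
      have h2 := (Finset.mem_sdiff.mp h).2
      simp [ha_def, hb_def, h1, h2]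
  have hsum1 : ∑ i ∈ S, b i = (S.card : ℝ) - ∑ i ∈ S, a i := by
    rw [Finset.sum_congr rfl hSb, Finset.sum_sub_distrib, Finset.sum_const, nsmul_eq_mul, mul_one]
  have hle1 : ∑ i ∈ S, a i ≤ ∑ i, a i :=
    Finset.sum_le_sum_of_subset_of_nonneg (Finset.subset_univ S)
      (fun i _ _ => (ha i).1)
  have hle2 : ∑ i ∈ S, b i ≤ ∑ i, b i :=
    Finset.sum_le_sum_of_subset_of_nonneg (Finset.subset_univ S)
      (fun i _ _ => (hb i).1)
  have hScard2 : (2 : ℝ) ≤ (S.card : ℝ) := by exact_mod_cast hS2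
  linarith
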